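/- Let μ > 2, α < 0, and N a positive integer. Then there exists ω* > α²/N² such that the mass M(ω) = (N (μ+1)^{1/μ}/μ) ω^{1/μ − 1/2} ∫_{|α|/(N√ω)}^{1} (1 − t²)^{1/μ − 1} dt of the N-tail state satisfies M'(ω) > 0 for ω ∈ (α²/N², ω*) and M'(ω) < 0 for ω > ω*. In particular, in the supercritical regime μ > 2 the Vakhitov–Kolokolov condition holds precisely for frequencies below the threshold ω*. -/

import Mathlib

set_option maxHeartbeats 1000000


open MeasureTheory Set intervalIntegral

/-- The squared `L²` norm (mass) of the `N`-tail stationary state `Ψ⁰_ω`, as a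
function of `ω`:
`M(ω) = (N (μ+1)^{1/μ}/μ) ω^{1/μ − 1/2} ∫_{|α|/(N√ω)}^{1} (1 − t²)^{1/μ − 1} dt`. -/
noncomputable def tailMass (μ α : ℝ) (N : ℕ) (ω : ℝ) : ℝ :=
  ((N : ℝ) * (μ + 1) ^ (1 / μ) / μ) * ω ^ (1 / μ - 1 / 2) *
    ∫ t in (|α| / (N * Real.sqrt ω))..1, (1 - t ^ 2) ^ (1 / μ - 1)

lemma aux_meas (p : ℝ) : Measurable fun t : ℝ => (1 - t ^ 2) ^ p := by measurability

lemma aux_integrable {p : ℝ} (hp1 : -1 < p) (hp0 : p ≤ 0) {x : ℝ} (hx0 : 0 ≤ x)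
    (hx1 : x ≤ 1) : IntervalIntegrable (fun t : ℝ => (1 - t ^ 2) ^ p) volume x 1 := by
  have hg : IntervalIntegrable (fun t : ℝ => (1 - t) ^ p) volume x 1 := by
    simpa using ((intervalIntegrable_rpow' (a := 0) (b := 1 - x) hp1).comp_sub_left 1).symm
  refine hg.mono_fun ((aux_meas p).aestronglyMeasurable) ?_
  rw [Filter.EventuallyLE, ae_restrict_iff' measurableSet_uIoc]
  filter_upwards with t ht
  rw [uIoc_of_le hx1] at ht
  obtain ⟨ht0, ht1⟩ := ht
  have h0t : 0 ≤ t := le_trans hx0 ht0.le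
  have h1 : (0:ℝ) ≤ 1 - t := by linarith
  have h2 : (0:ℝ) ≤ 1 + t := by linarith
  have hfac : (1 : ℝ) - t ^ 2 = (1 - t) * (1 + t) := by ring
  rw [Real.norm_eq_abs, Real.norm_eq_abs, hfac,
    abs_of_nonneg (Real.rpow_nonneg (mul_nonneg h1 h2) p),
    abs_of_nonneg (Real.rpow_nonneg h1 p), Real.mul_rpow h1 h2]
  exact mul_le_of_le_one_right (Real.rpow_nonneg h1 p)
    (Real.rpow_le_one_of_one_le_of_nonpos (by linarith) hp0)

lemma aux_F_pos {p : ℝ} (hp1 : -1 < p) (hp0 : p ≤ 0) {x : ℝ} (hx0 : 0 ≤ x) (hx1 : x < 1) :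
    0 < ∫ t in x..1, (1 - t ^ 2) ^ p := by
  refine intervalIntegral_pos_of_pos_on (aux_integrable hp1 hp0 hx0 hx1.le)
    (fun t ht => Real.rpow_pos_of_pos ?_ p) hx1
  have h1 := ht.1; have h2 := ht.2
  nlinarith [lt_of_le_of_lt hx0 h1]

lemma aux_F_mono {p : ℝ} (hp1 : -1 < p) (hp0 : p ≤ 0) {u v : ℝ} (hu : 0 ≤ u) (huv : u ≤ v)
    (hv : v ≤ 1) :
    (∫ t in v..1, (1 - t ^ 2) ^ p) ≤ ∫ t in u..1, (1 - t ^ 2) ^ p := by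
  have hiu := aux_integrable hp1 hp0 hu (huv.trans hv)
  have hiv := aux_integrable hp1 hp0 (hu.trans huv) hv
  have hi : IntervalIntegrable (fun t : ℝ => (1 - t ^ 2) ^ p) volume u v := by
    refine hiu.mono_set (uIcc_subset_uIcc ?_ ?_) <;>
      · rw [uIcc_of_le (huv.trans hv)]
        constructor <;> first | exact le_refl _ | linarith
  have hsplit := intervalIntegral.integral_add_adjacent_intervals hi hiv
  have hnn : 0 ≤ ∫ t in u..v, (1 - t ^ 2) ^ p := by
    refine intervalIntegral.integral_nonneg huv (fun t ht => Real.rpow_nonneg ?_ p)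
    have h1 := ht.1; have h2 := ht.2
    nlinarith
  linarith [hsplit]

lemma aux_F_deriv {p : ℝ} (hp1 : -1 < p) (hp0 : p ≤ 0) {x : ℝ} (hx0 : 0 < x) (hx1 : x < 1) :
    HasDerivAt (fun y => ∫ t in y..1, (1 - t ^ 2) ^ p) (-(1 - x ^ 2) ^ p) x := by
  refine intervalIntegral.integral_hasDerivAt_left (aux_integrable hp1 hp0 hx0.le hx1.le)
    ((aux_meas p).stronglyMeasurable.stronglyMeasurableAtFilter) ?_
  have hb : (0:ℝ) < 1 - x ^ 2 := by nlinarith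
  have hc : ContinuousAt (fun y : ℝ => 1 - y ^ 2) x := by fun_prop
  have houter : ContinuousAt (fun y : ℝ => y ^ p) (1 - x ^ 2) :=
    Real.continuousAt_rpow_const _ _ (Or.inl hb.ne')
  have hcomp : ContinuousAt ((fun y : ℝ => y ^ p) ∘ fun y : ℝ => 1 - y ^ 2) x :=
    ContinuousAt.comp houter hc
  exact hcomp

/-- The auxiliary function whose sign controls `M'(ω)`. -/
noncomputable def auxG (p q : ℝ) (x : ℝ) : ℝ :=
  q * (∫ t in x..1, (1 - t ^ 2) ^ p) + x / 2 * (1 - x ^ 2) ^ p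

lemma auxG_deriv {p q x : ℝ} (hp1 : -1 < p) (hp0 : p < 0) (hq : q = p + 1 / 2)
    (hx0 : 0 < x) (hx1 : x < 1) :
    HasDerivAt (auxG p q) (-p * (1 - x ^ 2) ^ (p - 1)) x := by
  have hb : (0:ℝ) < 1 - x ^ 2 := by nlinarith
  have h1 : HasDerivAt (fun y : ℝ => 1 - y ^ 2) (-(2 * x)) x := by
    simpa using ((hasDerivAt_pow 2 x).const_sub 1)
  have h2 : HasDerivAt (fun y : ℝ => (1 - y ^ 2) ^ p)
      (-(2 * x) * p * (1 - x ^ 2) ^ (p - 1)) x :=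
    HasDerivAt.rpow_const h1 (Or.inl hb.ne')
  have h3 : HasDerivAt (fun y : ℝ => y / 2 * (1 - y ^ 2) ^ p)
      (1 / 2 * (1 - x ^ 2) ^ p + x / 2 * (-(2 * x) * p * (1 - x ^ 2) ^ (p - 1))) x := by
    have := ((hasDerivAt_id x).div_const 2).fun_mul h2
    simpa using this
  have h4 := ((aux_F_deriv hp1 hp0.le hx0 hx1).const_mul q).fun_add h3
  have hbp : (1 - x ^ 2) ^ p = (1 - x ^ 2) ^ (p - 1) * (1 - x ^ 2) := by
    rw [← Real.rpow_add_one hb.ne' (p - 1), sub_add_cancel]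
  unfold auxG
  refine h4.congr_deriv ?_
  rw [hbp, hq]; ring

lemma auxG_strictMono {p q : ℝ} (hp1 : -1 < p) (hp0 : p < 0) (hq : q = p + 1 / 2) :
    StrictMonoOn (auxG p q) (Ioo 0 1) := by
  apply strictMonoOn_of_deriv_pos (convex_Ioo 0 1)
  · exact fun x hx =>
      (auxG_deriv hp1 hp0 hq hx.1 hx.2).differentiableAt.continuousAt.continuousWithinAt
  · intro x hx
    rw [interior_Ioo] at hx
    rw [(auxG_deriv hp1 hp0 hq hx.1 hx.2).deriv]
    have hb : (0:ℝ) < 1 - x ^ 2 := by nlinarith [hx.1, hx.2]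
    exact mul_pos (by linarith) (Real.rpow_pos_of_pos hb _)

lemma auxG_signchange {p q : ℝ} (hp1 : -1 < p) (hp2 : p < -(1 / 2)) (hq : q = p + 1 / 2) :
    ∃ xs ∈ Ioo (0:ℝ) 1, auxG p q xs = 0 := by
  have hp0 : p < 0 := by linarith
  have hq0 : q < 0 := by rw [hq]; linarith
  have hFh : 0 < ∫ t in (1/2 : ℝ)..1, (1 - t ^ 2) ^ p :=
    aux_F_pos hp1 hp0.le (by norm_num) (by norm_num)
  have hF0 : 0 < ∫ t in (0 : ℝ)..1, (1 - t ^ 2) ^ p :=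
    aux_F_pos hp1 hp0.le le_rfl (by norm_num)
  -- the point where G is negative
  obtain ⟨x₀, hx₀def⟩ :
      ∃ x₀ : ℝ, x₀ = min (1/2) (-q * ∫ t in (1/2 : ℝ)..1, (1 - t ^ 2) ^ p) := ⟨_, rfl⟩
  have hx₀pos : 0 < x₀ := by
    rw [hx₀def]; exact lt_min (by norm_num) (mul_pos (by linarith) hFh)
  have hx₀le : x₀ ≤ 1/2 := by rw [hx₀def]; exact min_le_left _ _
  have hGx₀ : auxG p q x₀ < 0 := by
    have hFle : (∫ t in (1/2 : ℝ)..1, (1 - t ^ 2) ^ p) ≤ ∫ t in x₀..1, (1 - t ^ 2) ^ p :=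
      aux_F_mono hp1 hp0.le hx₀pos.le hx₀le (by norm_num)
    have h1 : q * (∫ t in x₀..1, (1 - t ^ 2) ^ p) ≤
        q * ∫ t in (1/2 : ℝ)..1, (1 - t ^ 2) ^ p :=
      mul_le_mul_of_nonpos_left hFle hq0.le
    have hb : (0:ℝ) < 1 - x₀ ^ 2 := by nlinarith
    have hb34 : (3/4 : ℝ) ≤ 1 - x₀ ^ 2 := by nlinarith
    have h2 : (1 - x₀ ^ 2) ^ p ≤ 4/3 := by
      calc (1 - x₀ ^ 2) ^ p ≤ (1 - x₀ ^ 2) ^ (-1 : ℝ) :=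
            Real.rpow_le_rpow_of_exponent_ge hb (by nlinarith) (by linarith)
        _ = (1 - x₀ ^ 2)⁻¹ := Real.rpow_neg_one _
        _ ≤ 4/3 := by
            rw [inv_le_comm₀ hb (by norm_num)]
            linarith
    have h3 : x₀ / 2 * (1 - x₀ ^ 2) ^ p ≤ x₀ * (2/3) := by
      have hnn : 0 ≤ (1 - x₀ ^ 2) ^ p := Real.rpow_nonneg hb.le _
      nlinarith
    have h4 : x₀ ≤ -q * ∫ t in (1/2 : ℝ)..1, (1 - t ^ 2) ^ p := by
      rw [hx₀def]; exact min_le_right _ _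
    have h5 : q * (∫ t in (1/2 : ℝ)..1, (1 - t ^ 2) ^ p) < 0 :=
      mul_neg_of_neg_of_pos hq0 hFh
    rw [auxG]
    linarith [h1, h3, h4, h5]
  -- the point where G is positive
  obtain ⟨K, hKdef⟩ : ∃ K : ℝ, K = -q * (∫ t in (0:ℝ)..1, (1 - t ^ 2) ^ p) + 1 := ⟨_, rfl⟩
  have hK1 : 1 ≤ K := by
    have : 0 < -q * ∫ t in (0:ℝ)..1, (1 - t ^ 2) ^ p := mul_pos (by linarith) hF0
    linarith [hKdef]
  have hK0 : 0 < K := by linarith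
  obtain ⟨ε, hεdef⟩ : ∃ ε : ℝ, ε = min (3/4) (1 / (16 * K ^ 2)) := ⟨_, rfl⟩
  have hε0 : 0 < ε := by rw [hεdef]; exact lt_min (by norm_num) (by positivity)
  have hε34 : ε ≤ 3/4 := by rw [hεdef]; exact min_le_left _ _
  have hεK : ε ≤ 1 / (16 * K ^ 2) := by rw [hεdef]; exact min_le_right _ _
  obtain ⟨x₁, hx₁def⟩ : ∃ x₁ : ℝ, x₁ = Real.sqrt (1 - ε) := ⟨_, rfl⟩
  have hx₁nn : 0 ≤ x₁ := by rw [hx₁def]; exact Real.sqrt_nonneg _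
  have hx₁sq : x₁ ^ 2 = 1 - ε := by rw [hx₁def]; exact Real.sq_sqrt (by linarith)
  have hx₁lt1 : x₁ < 1 := by nlinarith
  have hx₁half : 1/2 ≤ x₁ := by nlinarith
  have hGx₁ : 0 < auxG p q x₁ := by
    have hFle : (∫ t in x₁..1, (1 - t ^ 2) ^ p) ≤ ∫ t in (0:ℝ)..1, (1 - t ^ 2) ^ p :=
      aux_F_mono hp1 hp0.le le_rfl hx₁nn hx₁lt1.le
    have h1 : q * (∫ t in (0:ℝ)..1, (1 - t ^ 2) ^ p) ≤ q * ∫ t in x₁..1, (1 - t ^ 2) ^ p :=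
      mul_le_mul_of_nonpos_left hFle hq0.le
    have hb : 1 - x₁ ^ 2 = ε := by rw [hx₁sq]; ring
    have h2a : ε ^ (-(1/2) : ℝ) ≤ ε ^ p :=
      Real.rpow_le_rpow_of_exponent_ge hε0 (by linarith) (by linarith)
    have h2b : ε ^ (-(1/2) : ℝ) = (Real.sqrt ε)⁻¹ := by
      rw [Real.rpow_neg hε0.le, Real.sqrt_eq_rpow]
    have hsε0 : 0 < Real.sqrt ε := Real.sqrt_pos.mpr hε0
    have hsε : Real.sqrt ε ≤ 1 / (4 * K) := by
      have h16 : (1 : ℝ) / (16 * K ^ 2) = (1 / (4 * K)) ^ 2 := by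
        field_simp; ring
      calc Real.sqrt ε ≤ Real.sqrt (1 / (16 * K ^ 2)) := Real.sqrt_le_sqrt hεK
        _ = 1 / (4 * K) := by rw [h16, Real.sqrt_sq (by positivity)]
    have h2c : 4 * K ≤ (Real.sqrt ε)⁻¹ := by
      rw [le_inv_comm₀ (by positivity) hsε0]
      calc Real.sqrt ε ≤ 1 / (4 * K) := hsε
        _ = (4 * K)⁻¹ := one_div _
    have h2 : 4 * K ≤ ε ^ p := le_trans (h2b ▸ h2c) h2a
    have h3 : K ≤ x₁ / 2 * (1 - x₁ ^ 2) ^ p := by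
      rw [hb]
      nlinarith
    rw [auxG]
    linarith [h1, h3]
  -- intermediate value theorem
  have hx₀x₁ : x₀ < x₁ := by
    rcases lt_or_eq_of_le (hx₀le.trans hx₁half) with h | h
    · exact h
    · exfalso; rw [h] at hGx₀; linarith
  have hcont : ContinuousOn (auxG p q) (Icc x₀ x₁) := fun y hy =>
    (auxG_deriv hp1 hp0 hq (lt_of_lt_of_le hx₀pos hy.1)
      (lt_of_le_of_lt hy.2 hx₁lt1)).differentiableAt.continuousAt.continuousWithinAt
  have hmem : (0:ℝ) ∈ Ioo (auxG p q x₀) (auxG p q x₁) := ⟨hGx₀, hGx₁⟩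
  obtain ⟨xs, hxs, hGxs⟩ := intermediate_value_Ioo hx₀x₁.le hcont hmem
  exact ⟨xs, ⟨hx₀pos.trans hxs.1, hxs.2.trans hx₁lt1⟩, hGxs⟩

theorem stmt_11 (μ α : ℝ) (hμ : 2 < μ) (hα : α < 0) (N : ℕ) (hN : 0 < N) :
    -- in the supercritical regime the Vakhitov–Kolokolov condition `M'(ω) > 0`
    -- holds precisely below a threshold frequency `ω*`
    ∃ ωstar : ℝ, ωstar > α ^ 2 / (N : ℝ) ^ 2 ∧
      (∀ ω : ℝ, α ^ 2 / (N : ℝ) ^ 2 < ω → ω < ωstar →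
        0 < deriv (tailMass μ α N) ω) ∧
      (∀ ω : ℝ, ωstar < ω → deriv (tailMass μ α N) ω < 0) := by
  have hμ0 : 0 < μ := by linarith
  have h1μ : 0 < 1 / μ := by positivity
  have h1μ2 : 1 / μ < 1 / 2 := one_div_lt_one_div_of_lt (by norm_num) hμ
  obtain ⟨p, hpdef⟩ : ∃ p : ℝ, p = 1 / μ - 1 := ⟨_, rfl⟩
  obtain ⟨q, hqdef⟩ : ∃ q : ℝ, q = 1 / μ - 1 / 2 := ⟨_, rfl⟩
  have hp1 : -1 < p := by rw [hpdef]; linarith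
  have hp2 : p < -(1 / 2) := by rw [hpdef]; linarith
  have hp0 : p < 0 := by linarith
  have hq : q = p + 1 / 2 := by rw [hpdef, hqdef]; ring
  have hq0 : q < 0 := by rw [hq]; linarith
  have hα' : 0 < |α| := abs_pos.mpr hα.ne
  have hN' : (0:ℝ) < N := Nat.cast_pos.mpr hN
  obtain ⟨a, hadef⟩ : ∃ a : ℝ, a = |α| / N := ⟨_, rfl⟩
  have ha : 0 < a := by rw [hadef]; exact div_pos hα' hN'
  have haa : a ^ 2 = α ^ 2 / (N : ℝ) ^ 2 := by rw [hadef, div_pow, sq_abs]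
  obtain ⟨C, hCdef⟩ : ∃ C : ℝ, C = (N : ℝ) * (μ + 1) ^ (1 / μ) / μ := ⟨_, rfl⟩
  have hCpos : 0 < C := by
    rw [hCdef]
    exact div_pos (mul_pos hN' (Real.rpow_pos_of_pos (by linarith : (0:ℝ) < μ + 1) _)) hμ0
  -- the key formula for the derivative of the mass
  have key : ∀ ω : ℝ, a ^ 2 < ω →
      deriv (tailMass μ α N) ω = C * ω ^ (q - 1) * auxG p q (a / Real.sqrt ω) := by
    intro ω hω
    have hω0 : 0 < ω := (sq_nonneg a).trans_lt hω
    have hsω : 0 < Real.sqrt ω := Real.sqrt_pos.mpr hω0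
    have hx0 : 0 < a / Real.sqrt ω := div_pos ha hsω
    have hxa : a < Real.sqrt ω := by
      rw [show a = Real.sqrt (a ^ 2) from (Real.sqrt_sq ha.le).symm]
      exact Real.sqrt_lt_sqrt (sq_nonneg a) hω
    have hx1 : a / Real.sqrt ω < 1 := (div_lt_one hsω).mpr hxa
    have hxder : HasDerivAt (fun w : ℝ => a / Real.sqrt w)
        (-(a / Real.sqrt ω) / (2 * ω)) ω := by
      have h := (hasDerivAt_const ω a).div (Real.hasDerivAt_sqrt hω0.ne') hsω.ne'
      have hss : Real.sqrt ω ^ 2 = ω := Real.sq_sqrt hω0.le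
      have he : (0 * Real.sqrt ω - a * (1 / (2 * Real.sqrt ω))) / Real.sqrt ω ^ 2 =
          -(a / Real.sqrt ω) / (2 * ω) := by
        rw [hss]
        field_simp
        ring
      exact he ▸ h
    have hFder := aux_F_deriv hp1 hp0.le hx0 hx1
    have hcomp : HasDerivAt (fun w : ℝ => ∫ t in (a / Real.sqrt w)..1, (1 - t ^ 2) ^ p)
        (-(1 - (a / Real.sqrt ω) ^ 2) ^ p * (-(a / Real.sqrt ω) / (2 * ω))) ω :=
      by have := HasDerivAt.comp ω (h := fun w : ℝ => a / Real.sqrt w) hFder hxder; exact this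
    have hpow : HasDerivAt (fun w : ℝ => w ^ q) (q * ω ^ (q - 1)) ω :=
      Real.hasDerivAt_rpow_const (Or.inl hω0.ne')
    have hprod := (hpow.const_mul C).fun_mul hcomp
    have htm : tailMass μ α N = fun w : ℝ =>
        C * w ^ q * ∫ t in (a / Real.sqrt w)..1, (1 - t ^ 2) ^ p := by
      funext w
      simp only [tailMass]
      rw [hpdef, hqdef, hCdef, hadef, div_div]
    rw [htm]
    rw [hprod.deriv]
    have hωq : ω ^ q = ω ^ (q - 1) * ω := by
      rw [← Real.rpow_add_one hω0.ne' (q - 1), sub_add_cancel]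
    rw [auxG, hωq]
    field_simp
  obtain ⟨xs, hxs, hGxs⟩ := auxG_signchange hp1 hp2 hq
  obtain ⟨hxs0, hxs1⟩ := hxs
  have hωs : a ^ 2 < (a / xs) ^ 2 := by
    rw [div_pow, lt_div_iff₀ (by positivity)]
    have hxs2 : (0:ℝ) < 1 - xs ^ 2 := by nlinarith
    nlinarith [mul_pos (pow_pos ha 2) hxs2]
  have hsqs : Real.sqrt ((a / xs) ^ 2) = a / xs := Real.sqrt_sq (by positivity)
  refine ⟨(a / xs) ^ 2, by rw [← haa]; exact hωs, ?_, ?_⟩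
  · intro ω h1 h2
    rw [← haa] at h1
    rw [key ω h1]
    have hω0 : 0 < ω := (sq_nonneg a).trans_lt h1
    have hsω : 0 < Real.sqrt ω := Real.sqrt_pos.mpr hω0
    have hx0 : 0 < a / Real.sqrt ω := div_pos ha hsω
    have hxa : a < Real.sqrt ω := by
      rw [show a = Real.sqrt (a ^ 2) from (Real.sqrt_sq ha.le).symm]
      exact Real.sqrt_lt_sqrt (sq_nonneg a) h1
    have hx1 : a / Real.sqrt ω < 1 := (div_lt_one hsω).mpr hxa
    have hlt : Real.sqrt ω < a / xs := by
      rw [← hsqs]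
      exact Real.sqrt_lt_sqrt hω0.le h2
    have hxgt : xs < a / Real.sqrt ω := by
      rw [show xs = a / (a / xs) by field_simp]
      exact div_lt_div_of_pos_left ha hsω hlt
    have hGpos : 0 < auxG p q (a / Real.sqrt ω) := by
      have := (auxG_strictMono hp1 hp0 hq) ⟨hxs0, hxs1⟩ ⟨hx0, hx1⟩ hxgt
      rw [hGxs] at this
      exact this
    exact mul_pos (mul_pos hCpos (Real.rpow_pos_of_pos hω0 _)) hGpos
  · intro ω h2
    have h1 : a ^ 2 < ω := hωs.trans h2
    rw [key ω h1]
    have hω0 : 0 < ω := (sq_nonneg a).trans_lt h1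
    have hsω : 0 < Real.sqrt ω := Real.sqrt_pos.mpr hω0
    have hx0 : 0 < a / Real.sqrt ω := div_pos ha hsω
    have hlt : a / xs < Real.sqrt ω := by
      rw [← hsqs]
      exact Real.sqrt_lt_sqrt (by positivity) h2
    have hxlt : a / Real.sqrt ω < xs := by
      rw [show xs = a / (a / xs) by field_simp]
      exact div_lt_div_of_pos_left ha (by positivity) hlt
    have hx1 : a / Real.sqrt ω < 1 := hxlt.trans hxs1
    have hGneg : auxG p q (a / Real.sqrt ω) < 0 := by
      have := (auxG_strictMono hp1 hp0 hq) ⟨hx0, hx1⟩ ⟨hxs0, hxs1⟩ hxlt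
      rw [hGxs] at this
      exact this
    exact mul_neg_of_pos_of_neg (mul_pos hCpos (Real.rpow_pos_of_pos hω0 _)) hGneg
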